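/- Let θ : B⁺ → A⁺ be a homomorphism with θ(B) = A, φ : A⁺ → S surjective, ψ = φ ∘ θ. Define the two-sided Karnofsky–Rhodes congruence ≡_χ on X⁺ (for χ : X⁺ → S) by u ≡_χ v iff χ(u) = χ(v) and the paths p_u, p_v in Γ_χ traverse the same set of transition edges. Then u ≡_ψ v implies θ(u) ≡_φ θ(v), and hence the Karnofsky–Rhodes expansion of S with respect to φ is a homomorphic image of the one with respect to ψ. -/
import Mathlib


variable {A S : Type*}

/-- Image of a word under the extension of `φ` to the free monoid, in `S¹ = WithOne S`. -/
def phiStar [Semigroup S] (φ : A → S) (w : List A) : WithOne S :=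
  (w.map fun a => (φ a : WithOne S)).prod

/-- `φ` induces a surjective homomorphism `A⁺ → S`. -/
def PlusSurj [Semigroup S] (φ : A → S) : Prop :=
  ∀ s : S, ∃ w : List A, w ≠ [] ∧ phiStar φ w = (s : WithOne S)

/-- An edge `((s₁,t₁), a, (s₂,t₂))` of the two-sided Cayley graph `Γ_φ`. -/
def IsEdge [Semigroup S] (φ : A → S)
    (e : (WithOne S × WithOne S) × A × (WithOne S × WithOne S)) : Prop :=
  e.1.1 * (φ e.2.1 : WithOne S) = e.2.2.1 ∧ e.1.2 = (φ e.2.1 : WithOne S) * e.2.2.2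

/-- There is a path labeled `w` from `p` to `q` in `Γ_φ`. -/
def HasPath [Semigroup S] (φ : A → S) (p q : WithOne S × WithOne S) (w : List A) : Prop :=
  p.1 * phiStar φ w = q.1 ∧ p.2 = phiStar φ w * q.2

/-- There is a (possibly empty) path from `p` to `q` in `Γ_φ`. -/
def Reach [Semigroup S] (φ : A → S) (p q : WithOne S × WithOne S) : Prop :=
  ∃ w : List A, HasPath φ p q w

/-- `p` and `q` lie in the same strongly connected component of `Γ_φ`. -/
def SameSCC [Semigroup S] (φ : A → S) (p q : WithOne S × WithOne S) : Prop :=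
  Reach φ p q ∧ Reach φ q p

/-- `p` is a vertex of the canonical path `p_u` of the word `u` in `Γ_φ`. -/
def OnPath [Semigroup S] (φ : A → S) (u : List A) (p : WithOne S × WithOne S) : Prop :=
  ∃ u₁ u₂ : List A, u = u₁ ++ u₂ ∧ p = (phiStar φ u₁, phiStar φ u₂)

/-- The paths `p_u` and `p_v` meet the same strongly connected components of `Γ_φ`,
i.e. `C(p_u) = C(p_v)`. -/
def SameComponents [Semigroup S] (φ : A → S) (u v : List A) : Prop :=
  (∀ p, OnPath φ u p → ∃ q, OnPath φ v q ∧ SameSCC φ p q) ∧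
  (∀ q, OnPath φ v q → ∃ p, OnPath φ u p ∧ SameSCC φ p q)

/-- The two-sided connected congruence `u ≈_φ v`. -/
def ConnCong [Semigroup S] (φ : A → S) (u v : List A) : Prop :=
  phiStar φ u = phiStar φ v ∧ SameComponents φ u v

/-- `e` is an edge traversed by the canonical path `p_u` in `Γ_φ`. -/
def EdgeOfPath [Semigroup S] (φ : A → S) (u : List A)
    (e : (WithOne S × WithOne S) × A × (WithOne S × WithOne S)) : Prop :=
  ∃ u₁ u₂ : List A, u = u₁ ++ e.2.1 :: u₂ ∧
    e.1 = (phiStar φ u₁, phiStar φ (e.2.1 :: u₂)) ∧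
    e.2.2 = (phiStar φ (u₁ ++ [e.2.1]), phiStar φ u₂)

/-- `e` is a transition edge traversed by `p_u`: an edge of `p_u` whose endpoints lie in
distinct strongly connected components of `Γ_φ`. -/
def IsTransitionOfPath [Semigroup S] (φ : A → S) (u : List A)
    (e : (WithOne S × WithOne S) × A × (WithOne S × WithOne S)) : Prop :=
  EdgeOfPath φ u e ∧ ¬ SameSCC φ e.1 e.2.2

/-- The two-sided Karnofsky–Rhodes congruence `u ≡_φ v`: same image under `φ` and same set
of transition edges. -/
def KRCong [Semigroup S] (φ : A → S) (u v : List A) : Prop :=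
  phiStar φ u = phiStar φ v ∧
  ∀ e, IsTransitionOfPath φ u e ↔ IsTransitionOfPath φ v e


section Aux

variable {B : Type*} [Semigroup S]

lemma phiStar_map (θ : B → A) (φ : A → S) (u : List B) :
    phiStar φ (u.map θ) = phiStar (φ ∘ θ) u := by
  simp [phiStar, List.map_map, Function.comp_def]

lemma reach_iff (θ : B → A) (hθ : Function.Surjective θ) (φ : A → S)
    (p q : WithOne S × WithOne S) : Reach (φ ∘ θ) p q ↔ Reach φ p q := by
  constructor
  · rintro ⟨w, h1, h2⟩
    exact ⟨w.map θ, by rw [phiStar_map]; exact h1, by rw [phiStar_map]; exact h2⟩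
  · rintro ⟨w, h1, h2⟩
    refine ⟨w.map fun a => (hθ a).choose, ?_⟩
    have hm : (w.map fun a => (hθ a).choose).map θ = w := by
      rw [List.map_map]
      have : (θ ∘ fun a => (hθ a).choose) = id := funext fun a => (hθ a).choose_spec
      simp [this]
    constructor
    · rw [← phiStar_map θ, hm]; exact h1
    · rw [← phiStar_map θ, hm]; exact h2

lemma sameSCC_iff (θ : B → A) (hθ : Function.Surjective θ) (φ : A → S)
    (p q : WithOne S × WithOne S) : SameSCC (φ ∘ θ) p q ↔ SameSCC φ p q := by
  unfold SameSCC
  rw [reach_iff θ hθ, reach_iff θ hθ]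

lemma edgeOfPath_iff (θ : B → A) (φ : A → S) (u : List B)
    (p q : WithOne S × WithOne S) (a : A) :
    EdgeOfPath φ (u.map θ) (p, a, q) ↔ ∃ b, θ b = a ∧ EdgeOfPath (φ ∘ θ) u (p, b, q) := by
  constructor
  · rintro ⟨u₁, u₂, heq, hp, hq⟩
    rw [List.map_eq_append_iff] at heq
    obtain ⟨w₁, w₂', hw, hw1, hw2⟩ := heq
    rw [List.map_eq_cons_iff] at hw2
    obtain ⟨b, w₂, rfl, hb, hw2⟩ := hw2
    refine ⟨b, hb, w₁, w₂, hw, ?_, ?_⟩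
    · simp only at hp
      rw [hp, ← hw1, phiStar_map]
      have : (a :: u₂) = (b :: w₂).map θ := by simp [hb, hw2]
      rw [this, phiStar_map]
    · simp only at hq
      rw [hq, ← hw2]
      have : (u₁ ++ [a]) = (w₁ ++ [b]).map θ := by simp [hb, hw1]
      rw [this, phiStar_map, phiStar_map]
  · rintro ⟨b, hb, w₁, w₂, rfl, hp, hq⟩
    refine ⟨w₁.map θ, w₂.map θ, by simp [hb], ?_, ?_⟩
    · simp only at hp
      rw [hp, phiStar_map]
      have : (a :: List.map θ w₂) = (b :: w₂).map θ := by simp [hb]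
      rw [this, phiStar_map]
    · simp only at hq
      rw [hq]
      have : (List.map θ w₁ ++ [a]) = (w₁ ++ [b]).map θ := by simp [hb]
      rw [this, phiStar_map, phiStar_map]

lemma transition_iff (θ : B → A) (hθ : Function.Surjective θ) (φ : A → S) (u : List B)
    (p q : WithOne S × WithOne S) (a : A) :
    IsTransitionOfPath φ (u.map θ) (p, a, q) ↔
      ∃ b, θ b = a ∧ IsTransitionOfPath (φ ∘ θ) u (p, b, q) := by
  unfold IsTransitionOfPath
  rw [edgeOfPath_iff θ]
  constructor
  · rintro ⟨⟨b, hb, he⟩, hn⟩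
    exact ⟨b, hb, he, by simpa [sameSCC_iff θ hθ] using hn⟩
  · rintro ⟨b, hb, he, hn⟩
    exact ⟨⟨b, hb, he⟩, by simpa [sameSCC_iff θ hθ] using hn⟩

end Aux

/-- For a letter-to-letter substitution `θ : B → A` with `θ(B) = A` and `ψ = φ ∘ θ`:
`u ≡_ψ v` implies `θ(u) ≡_φ θ(v)`, and hence the Karnofsky–Rhodes expansion with respect to
`φ` is a homomorphic image of the one with respect to `ψ`. -/
theorem krCong_letter_substitution {B : Type*} [Semigroup S]
    (θ : B → A) (hθ : Function.Surjective θ)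
    (φ : A → S) (hφ : PlusSurj φ) :
    (∀ u v : List B, u ≠ [] → v ≠ [] →
      KRCong (φ ∘ θ) u v → KRCong φ (u.map θ) (v.map θ)) ∧
    (∃ g : Quot (fun u v : {w : List B // w ≠ []} => KRCong (φ ∘ θ) u.1 v.1) →
           Quot (fun u v : {w : List A // w ≠ []} => KRCong φ u.1 v.1),
      Function.Surjective g ∧
      ∀ u : {w : List B // w ≠ []},
        g (Quot.mk _ u) = Quot.mk _ ⟨u.1.map θ, by simpa using u.2⟩) := by
  have main : ∀ u v : List B, KRCong (φ ∘ θ) u v → KRCong φ (u.map θ) (v.map θ) := by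
    intro u v ⟨h1, h2⟩
    refine ⟨by rw [phiStar_map, phiStar_map]; exact h1, ?_⟩
    rintro ⟨p, a, q⟩
    rw [transition_iff θ hθ, transition_iff θ hθ]
    exact exists_congr fun b => and_congr_right fun _ => h2 _
  refine ⟨fun u v _ _ h => main u v h, ?_⟩
  refine ⟨Quot.lift (fun u => Quot.mk _ ⟨u.1.map θ, by simpa using u.2⟩)
    (fun u v h => Quot.sound (main u.1 v.1 h)), ?_, fun u => rfl⟩
  intro x
  obtain ⟨⟨w, hw⟩⟩ := x.exists_rep
  rename_i hx
  refine ⟨Quot.mk _ ⟨w.map fun a => (hθ a).choose, by simpa using hw⟩, ?_⟩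
  have hm : (w.map fun a => (hθ a).choose).map θ = w := by
    rw [List.map_map]
    have : (θ ∘ fun a => (hθ a).choose) = id := funext fun a => (hθ a).choose_spec
    simp [this]
  simp only [← hx]
  congr 1
  exact Subtype.ext hm
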